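/- Let Ω, Ω₁, …, Ωₙ be nonempty closed convex subsets of ℝˢ with Ωᵢ ∩ Ω = ∅ for all i = 1, …, n, and let x̄ ∈ Ω. For each i let aᵢ(x̄) = (x̄ − Π(x̄;Ωᵢ))/d(x̄;Ωᵢ). If x̄ is an optimal solution of the generalized Heron problem (i.e., D(x̄) ≤ D(x) for all x ∈ Ω with D(x) = ∑_{i=1}^n d(x;Ωᵢ)), then −∑_{i=1}^n aᵢ(x̄) ∈ N(x̄;Ω). -/

import Mathlib

open Metric Finset

/-- Necessity in Theorem 3.2: if `xbar` solves the generalized Heron problem and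
`Ωᵢ ∩ Ω = ∅` for all `i`, then `-∑ i, aᵢ(xbar) ∈ N(xbar; Ω)`, where
`aᵢ(xbar) = (xbar - Π(xbar; Ωᵢ)) / d(xbar; Ωᵢ)`. -/
theorem heron_optimal_necessary {s n : ℕ}
    (Ω : Set (EuclideanSpace ℝ (Fin s))) (Ωs : Fin n → Set (EuclideanSpace ℝ (Fin s)))
    (hΩne : Ω.Nonempty) (hΩcl : IsClosed Ω) (hΩcv : Convex ℝ Ω)
    (hne : ∀ i, (Ωs i).Nonempty) (hcl : ∀ i, IsClosed (Ωs i)) (hcv : ∀ i, Convex ℝ (Ωs i))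
    (hdisj : ∀ i, Ωs i ∩ Ω = ∅)
    (xbar : EuclideanSpace ℝ (Fin s)) (hxbar : xbar ∈ Ω)
    (p : Fin n → EuclideanSpace ℝ (Fin s))
    (hp : ∀ i, p i ∈ Ωs i ∧ dist xbar (p i) = Metric.infDist xbar (Ωs i))
    (a : Fin n → EuclideanSpace ℝ (Fin s))
    (ha : ∀ i, a i = (Metric.infDist xbar (Ωs i))⁻¹ • (xbar - p i))
    (hopt : ∀ x ∈ Ω, ∑ i, Metric.infDist xbar (Ωs i) ≤ ∑ i, Metric.infDist x (Ωs i)) :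
    ∀ x ∈ Ω, (inner ℝ (-(∑ i, a i)) (x - xbar) : ℝ) ≤ 0 := by
  intro x hx
  set v := x - xbar with hv
  -- distances are positive
  have hd : ∀ i, 0 < Metric.infDist xbar (Ωs i) := by
    intro i
    refine ((hcl i).notMem_iff_infDist_pos (hne i)).1 ?_
    intro hmem
    have : xbar ∈ Ωs i ∩ Ω := ⟨hmem, hxbar⟩
    simp [hdisj i] at this
  -- key upper bound on the moved distance
  have key : ∀ i, ∀ t : ℝ, 0 ≤ t →
      Metric.infDist (xbar + t • v) (Ωs i) ≤ Metric.infDist xbar (Ωs i)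
        + t * inner ℝ (a i) v + t ^ 2 * ‖v‖ ^ 2 / (2 * Metric.infDist xbar (Ωs i)) := by
    intro i t ht
    set A := Metric.infDist xbar (Ωs i) with hA
    have hApos : 0 < A := hd i
    set u := xbar - p i with hu
    have hAnorm : ‖u‖ = A := by
      rw [hu, ← dist_eq_norm]; exact (hp i).2
    have hle : Metric.infDist (xbar + t • v) (Ωs i) ≤ ‖u + t • v‖ := by
      have h := Metric.infDist_le_dist_of_mem (x := xbar + t • v) (hp i).1
      rw [dist_eq_norm] at h
      have heq : xbar + t • v - p i = u + t • v := by rw [hu]; abel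
      rw [heq] at h
      exact h
    have hcs : -(A * ‖v‖) ≤ inner ℝ u v := by
      have := abs_real_inner_le_norm u v
      rw [hAnorm] at this
      linarith [neg_abs_le (inner ℝ u v : ℝ)]
    set R := A + t * (inner ℝ u v / A) + t ^ 2 * ‖v‖ ^ 2 / (2 * A) with hR
    have hRpos : 0 < R := by
      have h2 : 2 * A * R = 2 * A ^ 2 + 2 * (t * inner ℝ u v) + t ^ 2 * ‖v‖ ^ 2 := by
        rw [hR]
        field_simp
      nlinarith [sq_nonneg (A - t * ‖v‖), mul_nonneg ht (by linarith : (0:ℝ) ≤ inner ℝ u v + A * ‖v‖), hApos]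
    have hsq : ‖u + t • v‖ ^ 2 ≤ R ^ 2 := by
      have hexp : ‖u + t • v‖ ^ 2 = ‖u‖ ^ 2 + 2 * (t * inner ℝ u v) + t ^ 2 * ‖v‖ ^ 2 := by
        rw [norm_add_sq_real, real_inner_smul_right, norm_smul]
        simp [abs_of_nonneg ht]
        ring
      rw [hexp, hAnorm]
      have h0 : (A : ℝ) ≠ 0 := ne_of_gt hApos
      have expand : R ^ 2 = A ^ 2 + 2 * (t * inner ℝ u v) + t ^ 2 * ‖v‖ ^ 2
          + (t * (inner ℝ u v / A) + t ^ 2 * ‖v‖ ^ 2 / (2 * A)) ^ 2 := by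
        rw [hR]
        field_simp
        ring
      rw [expand]
      nlinarith [sq_nonneg (t * (inner ℝ u v / A) + t ^ 2 * ‖v‖ ^ 2 / (2 * A))]
    have hfin : ‖u + t • v‖ ≤ R := by
      nlinarith [norm_nonneg (u + t • v)]
    have hav : (inner ℝ (a i) v : ℝ) = inner ℝ u v / A := by
      rw [ha i, real_inner_smul_left, hu, hA, inv_mul_eq_div]
    calc Metric.infDist (xbar + t • v) (Ωs i) ≤ ‖u + t • v‖ := hle
      _ ≤ R := hfin
      _ = A + t * inner ℝ (a i) v + t ^ 2 * ‖v‖ ^ 2 / (2 * A) := by rw [hav]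
  -- the sum inequality for each t ∈ (0,1]
  set S : ℝ := ∑ i, (inner ℝ (a i) v : ℝ) with hS
  set C : ℝ := ∑ i, ‖v‖ ^ 2 / (2 * Metric.infDist xbar (Ωs i)) with hC
  have hCnn : 0 ≤ C := by
    apply Finset.sum_nonneg
    intro i _
    exact div_nonneg (by positivity) (mul_nonneg (by norm_num) Metric.infDist_nonneg)
  have hmain : ∀ t : ℝ, 0 < t → t ≤ 1 → 0 ≤ S + t * C := by
    intro t ht0 ht1
    have hxt : xbar + t • v ∈ Ω := by
      have := hΩcv hxbar hx (by linarith : (0:ℝ) ≤ 1 - t) (le_of_lt ht0) (by ring)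
      convert this using 1
      rw [hv]
      module
    have h1 := hopt _ hxt
    have h2 : ∑ i, Metric.infDist (xbar + t • v) (Ωs i)
        ≤ ∑ i, Metric.infDist xbar (Ωs i) + t * S + t ^ 2 * C := by
      rw [hS, hC, Finset.mul_sum, Finset.mul_sum, ← Finset.sum_add_distrib,
        ← Finset.sum_add_distrib]
      apply Finset.sum_le_sum
      intro i _
      have := key i t (le_of_lt ht0)
      calc Metric.infDist (xbar + t • v) (Ωs i)
          ≤ Metric.infDist xbar (Ωs i) + t * inner ℝ (a i) v
            + t ^ 2 * ‖v‖ ^ 2 / (2 * Metric.infDist xbar (Ωs i)) := this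
        _ = Metric.infDist xbar (Ωs i) + t * inner ℝ (a i) v
            + t ^ 2 * (‖v‖ ^ 2 / (2 * Metric.infDist xbar (Ωs i))) := by ring
    have h3 : 0 ≤ t * S + t ^ 2 * C := by linarith
    have : 0 ≤ t * (S + t * C) := by nlinarith
    nlinarith [mul_pos ht0 (mul_pos ht0 ht0)]
  have hSnn : 0 ≤ S := by
    by_contra h
    push_neg at h
    set t := min 1 (-S / (2 * (C + 1))) with htdef
    have ht0 : 0 < t := by
      apply lt_min one_pos
      apply div_pos (by linarith) (by linarith)
    have ht1 : t ≤ 1 := min_le_left _ _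
    have htb : t ≤ -S / (2 * (C + 1)) := min_le_right _ _
    have := hmain t ht0 ht1
    have htC : t * C ≤ -S / 2 := by
      calc t * C ≤ (-S / (2 * (C + 1))) * C := by
            apply mul_le_mul_of_nonneg_right htb hCnn
        _ ≤ -S / 2 := by
            rw [div_mul_eq_mul_div, div_le_div_iff₀ (by linarith) (by norm_num)]
            nlinarith
    linarith
  -- conclude
  have : (inner ℝ (-(∑ i, a i)) (x - xbar) : ℝ) = -S := by
    rw [inner_neg_left, hS, ← hv, sum_inner]
  rw [this]
  linarith
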